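/- There exists a finitely generated group Γ that is presentable by a product, but such that for every pair of commuting infinite subgroups Γ₁, Γ₂ of Γ for which the subgroup generated by Γ₁ ∪ Γ₂ has finite index in Γ, at least one of Γ₁, Γ₂ is not finitely generated. -/

import Mathlib

open LaurentPolynomial

/-- An infinite group `G` is presentable by a product if there exist two commuting
infinite subgroups `H`, `K` of `G` such that the subgroup generated by `H ∪ K`
has finite index in `G`. -/
def PresentableByProduct (G : Type*) [Group G] : Prop :=
  ∃ H K : Subgroup G, Infinite H ∧ Infinite K ∧
    (∀ h ∈ H, ∀ k ∈ K, h * k = k * h) ∧ (H ⊔ K).FiniteIndex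

abbrev RR := LaurentPolynomial (ZMod 2)

namespace PBP

lemma T_single (n : ℤ) : (T n : RR) = AddMonoidAlgebra.single n 1 := rfl

-- key injectivity lemma
lemma T_mul_eq_self {n : ℤ} (hn : n ≠ 0) {u : RR} (h : T n * u = u) : u = 0 := by
  by_contra hu
  obtain ⟨x, hx⟩ := Finsupp.support_nonempty_iff.mpr (fun h0 => hu (congrArg AddMonoidAlgebra.ofCoeff h0))
  have key : ∀ k : ℕ, x + k * n ∈ u.coeff.support := by
    intro k
    induction k with
    | zero => simpa using hx
    | succ k ih =>
      have h2 := Finsupp.ext_iff.mp (congrArg AddMonoidAlgebra.coeff h) (x + ((k : ℤ)+1) * n)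
      rw [T_single] at h2
      rw [AddMonoidAlgebra.coeff_single_mul_apply u (1 : ZMod 2) n] at h2
      have h3 : -n + (x + ((k : ℤ)+1) * n) = x + k * n := by ring
      rw [h3, one_mul] at h2
      rw [Finsupp.mem_support_iff] at ih ⊢
      push_cast
      rw [← h2]
      exact_mod_cast ih
  have hinj : Function.Injective (fun k : ℕ => (⟨x + k * n, key k⟩ : {y // y ∈ u.coeff.support})) := by
    intro k l hkl
    have h1 : x + (k : ℤ) * n = x + l * n := congrArg Subtype.val hkl
    have h2 : (k : ℤ) * n = l * n := by linarith
    exact_mod_cast mul_right_cancel₀ hn h2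
  have hfin : Finite {y // y ∈ u.coeff.support} := inferInstance
  exact (Finite.not_infinite hfin) (Infinite.of_injective _ hinj)

lemma T_sub_one_inj {n : ℤ} (hn : n ≠ 0) {u v : RR} (h : (T n - 1) * u = (T n - 1) * v) :
    u = v := by
  have h2 : T n * (u - v) = u - v := by ring_nf; ring_nf at h; rw [mul_comm] at h ⊢; linear_combination h
  have := T_mul_eq_self hn h2
  exact sub_eq_zero.mp this

end PBP

namespace PBP2
open PBP

/-- The group `Heis(F₂[t,t⁻¹]) ⋊ ℤ`. -/
@[ext] structure G where
  a : RR
  b : RR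
  c : RR
  n : ℤ

namespace G

noncomputable instance : Mul G :=
  ⟨fun g h => ⟨g.a + T g.n * h.a, g.b + T (-g.n) * h.b,
    g.c + h.c + g.a * (T (-g.n) * h.b), g.n + h.n⟩⟩

noncomputable instance : One G := ⟨⟨0, 0, 0, 0⟩⟩

noncomputable instance : Inv G :=
  ⟨fun g => ⟨-(T (-g.n) * g.a), -(T g.n * g.b), -g.c + g.a * g.b, -g.n⟩⟩

@[simp] lemma mul_a (g h : G) : (g * h).a = g.a + T g.n * h.a := rfl
@[simp] lemma mul_b (g h : G) : (g * h).b = g.b + T (-g.n) * h.b := rfl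
@[simp] lemma mul_c (g h : G) : (g * h).c = g.c + h.c + g.a * (T (-g.n) * h.b) := rfl
@[simp] lemma mul_n (g h : G) : (g * h).n = g.n + h.n := rfl
@[simp] lemma one_a : (1 : G).a = 0 := rfl
@[simp] lemma one_b : (1 : G).b = 0 := rfl
@[simp] lemma one_c : (1 : G).c = 0 := rfl
@[simp] lemma one_n : (1 : G).n = 0 := rfl
@[simp] lemma inv_a (g : G) : (g⁻¹).a = -(T (-g.n) * g.a) := rfl
@[simp] lemma inv_b (g : G) : (g⁻¹).b = -(T g.n * g.b) := rfl
@[simp] lemma inv_c (g : G) : (g⁻¹).c = -g.c + g.a * g.b := rfl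
@[simp] lemma inv_n (g : G) : (g⁻¹).n = -g.n := rfl

lemma TmulT (m : ℤ) : (T m * T (-m) : RR) = 1 := by
  rw [← T_add, add_neg_cancel, T_zero]

noncomputable instance group : Group G := by
  apply Group.ofLeftAxioms
  · intro g h k
    have t1 : (T (g.n + h.n) : RR) = T g.n * T h.n := T_add _ _
    have t2 : (T (-(g.n + h.n)) : RR) = T (-g.n) * T (-h.n) := by
      rw [← T_add]; congr 1; ring
    have t3 : (T g.n * T (-g.n) : RR) = 1 := TmulT _
    ext : 1
    · simp only [mul_a, mul_n]; linear_combination k.a * t1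
    · simp only [mul_b, mul_n]; linear_combination k.b * t2
    · simp only [mul_a, mul_b, mul_c, mul_n]
      linear_combination ((g.a + T g.n * h.a) * k.b) * t2 + (h.a * T (-h.n) * k.b) * t3
    · simp only [mul_n]; ring
  · intro g
    ext : 1 <;> simp [T_zero]
  · intro g
    have t3 : (T (-g.n) * T g.n : RR) = 1 := by
      rw [← T_add, neg_add_cancel, T_zero]
    ext : 1
    · simp only [mul_a, inv_a, inv_n, neg_neg, one_a]; ring
    · simp only [mul_b, inv_b, inv_n, neg_neg, one_b]; ring
    · simp only [mul_c, mul_a, mul_b, inv_a, inv_b, inv_c, inv_n, neg_neg, one_c]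
      linear_combination -(g.a * g.b) * t3
    · simp only [mul_n, inv_n, one_n]; ring

end G
end PBP2

namespace PBP2
open PBP
namespace G

/-! ### char 2 -/

lemma char2 (u : RR) : u + u = 0 := by
  have h : (2 : ZMod 2) • u = u + u := two_smul _ u
  have h2 : (2 : ZMod 2) = 0 := by decide
  rw [h2, zero_smul] at h
  exact h.symm

/-! ### commuting consequences -/

lemma eq_of_comm_a {g h : G} (hc : g * h = h * g) :
    (T h.n - 1) * g.a = (T g.n - 1) * h.a := by
  have := congrArg G.a hc
  simp only [mul_a] at this
  linear_combination -this

lemma eq_of_comm_b {g h : G} (hc : g * h = h * g) :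
    (T (-h.n) - 1) * g.b = (T (-g.n) - 1) * h.b := by
  have := congrArg G.b hc
  simp only [mul_b] at this
  linear_combination -this

lemma centralizer_n_zero {γ h : G} (hn : γ.n ≠ 0) (hc : γ * h = h * γ) (h0 : h.n = 0) :
    h.a = 0 ∧ h.b = 0 := by
  constructor
  · refine T_sub_one_inj hn (u := h.a) (v := 0) ?_
    have := eq_of_comm_a hc.symm
    rw [h0, T_zero] at this
    linear_combination this
  · refine T_sub_one_inj (neg_ne_zero.mpr hn) (u := h.b) (v := 0) ?_
    have := eq_of_comm_b hc.symm
    rw [h0, neg_zero, T_zero] at this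
    linear_combination this

/-! ### the subgroups -/

/-- The central subgroup `{(0,0,c,0)}`. -/
noncomputable def Zc : Subgroup G where
  carrier := {g | g.a = 0 ∧ g.b = 0 ∧ g.n = 0}
  one_mem' := by simp
  mul_mem' := by
    rintro g h ⟨ha, hb, hn⟩ ⟨ha', hb', hn'⟩
    refine ⟨?_, ?_, ?_⟩ <;> simp [ha, hb, hn, ha', hb', hn']
  inv_mem' := by
    rintro g ⟨ha, hb, hn⟩
    refine ⟨?_, ?_, ?_⟩ <;> simp [ha, hb, hn]

lemma mem_Zc {g : G} : g ∈ Zc ↔ g.a = 0 ∧ g.b = 0 ∧ g.n = 0 := Iff.rfl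

/-- The subgroup `{g | g.n = 0}` (the Heisenberg part). -/
noncomputable def NN : Subgroup G where
  carrier := {g | g.n = 0}
  one_mem' := by simp [Set.mem_setOf_eq]
  mul_mem' := by
    intro g h hg hh
    simp only [Set.mem_setOf_eq] at *
    simp [hg, hh]
  inv_mem' := by
    intro g hg
    simp only [Set.mem_setOf_eq] at *
    simp [hg]

/-- Given `γ` with `γ.n ≠ 0`, the "line" subgroup containing everything commuting
with something commuting with `γ`. -/
noncomputable def V (γ : G) : Subgroup G where
  carrier := {g | (T γ.n - 1) * g.a = (T g.n - 1) * γ.a ∧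
    (T (-γ.n) - 1) * g.b = (T (-g.n) - 1) * γ.b}
  one_mem' := by simp [T_zero]
  mul_mem' := by
    rintro g h ⟨hga, hgb⟩ ⟨hha, hhb⟩
    constructor
    · have t1 : (T (g.n + h.n) : RR) = T g.n * T h.n := T_add _ _
      simp only [mul_a, mul_n]
      linear_combination hga + T g.n * hha - γ.a * t1
    · have t2 : (T (-(g.n + h.n)) : RR) = T (-g.n) * T (-h.n) := by
        rw [← T_add]; congr 1; ring
      simp only [mul_b, mul_n]
      linear_combination hgb + T (-g.n) * hhb - γ.b * t2
  inv_mem' := by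
    rintro g ⟨hga, hgb⟩
    constructor
    · have t3 : (T (-g.n) * T g.n : RR) = 1 := by rw [← T_add, neg_add_cancel, T_zero]
      simp only [inv_a, inv_n]
      linear_combination (-(T (-g.n))) * hga - γ.a * t3
    · have t3 : (T g.n * T (-g.n) : RR) = 1 := TmulT _
      simp only [inv_b, inv_n, neg_neg]
      linear_combination (-(T g.n)) * hgb - γ.b * t3

lemma mem_V {γ g : G} : g ∈ V γ ↔ (T γ.n - 1) * g.a = (T g.n - 1) * γ.a ∧
    (T (-γ.n) - 1) * g.b = (T (-g.n) - 1) * γ.b := Iff.rfl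

lemma mem_V_of_comm {γ g : G} (hc : g * γ = γ * g) : g ∈ V γ :=
  ⟨eq_of_comm_a hc, eq_of_comm_b hc⟩

lemma mem_V_trans {γ δ g : G} (hδ : δ.n ≠ 0) (hγδ : γ * δ = δ * γ)
    (hc : g * δ = δ * g) : g ∈ V γ := by
  have h1a := eq_of_comm_a hc
  have h2a := eq_of_comm_a hγδ
  have h1b := eq_of_comm_b hc
  have h2b := eq_of_comm_b hγδ
  constructor
  · refine T_sub_one_inj hδ ?_
    linear_combination (T γ.n - 1) * h1a - (T g.n - 1) * h2a
  · refine T_sub_one_inj (neg_ne_zero.mpr hδ) ?_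
    linear_combination (T (-γ.n) - 1) * h1b - (T (-g.n) - 1) * h2b

end G
end PBP2

namespace PBP2
open PBP
namespace G

/-! ### infinite index facts -/

lemma Tinj : Function.Injective (fun n : ℤ => (T n : RR)) := by
  intro m n h
  have := AddMonoidAlgebra.single_left_injective (M := ℤ) (one_ne_zero (α := ZMod 2)) h
  exact this

instance : Infinite RR := Infinite.of_injective _ Tinj

lemma V_index_eq_zero {γ : G} (hγ : γ.n ≠ 0) : (V γ).index = 0 := by
  have hinj : Function.Injective
      (fun u : RR => (QuotientGroup.mk (⟨u, 0, 0, 0⟩ : G) : G ⧸ V γ)) := by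
    intro u v h
    rw [QuotientGroup.eq] at h
    obtain ⟨h1, -⟩ := h
    simp only [mul_a, inv_a, inv_n, neg_zero, T_zero, one_mul, mul_n, inv_n] at h1
    rw [show ((0:ℤ) + 0) = 0 from by norm_num, T_zero, sub_self, zero_mul] at h1
    exact T_sub_one_inj hγ (by linear_combination -h1)
  have : Infinite (G ⧸ V γ) := Infinite.of_injective _ hinj
  rw [Subgroup.index_eq_card]
  exact Nat.card_eq_zero_of_infinite

lemma NN_index_eq_zero : NN.index = 0 := by
  have hinj : Function.Injective
      (fun k : ℤ => (QuotientGroup.mk (⟨0, 0, 0, k⟩ : G) : G ⧸ NN)) := by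
    intro k l h
    rw [QuotientGroup.eq] at h
    have : (-k + l : ℤ) = 0 := h
    omega
  have : Infinite (G ⧸ NN) := Infinite.of_injective _ hinj
  rw [Subgroup.index_eq_card]
  exact Nat.card_eq_zero_of_infinite

lemma not_finiteIndex_of_le {W J : Subgroup G} (hle : J ≤ W) (hW : W.index = 0)
    (hJ : J.FiniteIndex) : False := by
  have := Subgroup.index_dvd_of_le hle
  rw [hW] at this
  exact hJ.index_ne_zero (zero_dvd_iff.mp this)

/-! ### finiteness of f.g. subgroups of Zc -/

lemma finite_of_le_Zc_of_fg {H : Subgroup G} (hle : H ≤ Zc) (hfg : H.FG) : Finite H := by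
  letI : CommGroup H :=
    { (inferInstance : Group H) with
      mul_comm := by
        rintro ⟨x, hx⟩ ⟨y, hy⟩
        obtain ⟨hxa, hxb, hxn⟩ := hle hx
        obtain ⟨hya, hyb, hyn⟩ := hle hy
        ext : 1
        show x * y = y * x
        ext <;> simp [hxa, hxb, hxn, hya, hyb, hyn] <;> ring }
  haveI : Group.FG H := (Group.fg_iff_subgroup_fg H).mpr hfg
  refine CommGroup.finite_of_fg_torsion (G := H) ?_
  intro x
  refine isOfFinOrder_iff_pow_eq_one.mpr ⟨2, two_pos, ?_⟩
  obtain ⟨hxa, hxb, hxn⟩ := hle x.2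
  ext : 1
  simp only [SubmonoidClass.coe_pow, OneMemClass.coe_one, pow_two]
  ext <;> simp [hxa, hxb, hxn, char2]

end G
end PBP2

namespace PBP2
open PBP
namespace G

/-! ### finite generation -/

lemma fg : Group.FG G := by
  rw [Group.fg_iff]
  refine ⟨{⟨1,0,0,0⟩, ⟨0,1,0,0⟩, ⟨0,0,0,1⟩}, ?_, Set.toFinite _⟩
  set W := Subgroup.closure ({⟨1,0,0,0⟩, ⟨0,1,0,0⟩, ⟨0,0,0,1⟩} : Set G) with hW
  have hx : (⟨1,0,0,0⟩ : G) ∈ W := Subgroup.subset_closure (by simp)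
  have hy : (⟨0,1,0,0⟩ : G) ∈ W := Subgroup.subset_closure (by simp)
  have hss : (⟨0,0,0,1⟩ : G) ∈ W := Subgroup.subset_closure (by simp)
  have hs : ∀ k : ℤ, (⟨0,0,0,k⟩ : G) ∈ W := by
    intro k
    induction k using Int.induction_on with
    | zero => exact one_mem W
    | succ k ih =>
      have : (⟨0,0,0,(k:ℤ)+1⟩ : G) = ⟨0,0,0,(k:ℤ)⟩ * ⟨0,0,0,1⟩ := by
        ext <;> simp
      rw [this]; exact mul_mem ih hss
    | pred k ih =>
      have : (⟨0,0,0,-(k:ℤ)-1⟩ : G) = ⟨0,0,0,-(k:ℤ)⟩ * (⟨0,0,0,1⟩ : G)⁻¹ := by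
        ext <;> simp [sub_eq_add_neg]
      rw [this]; exact mul_mem ih (inv_mem hss)
  have hX : ∀ u : RR, (⟨u,0,0,0⟩ : G) ∈ W := by
    have hXT : ∀ k : ℤ, (⟨T k,0,0,0⟩ : G) ∈ W := by
      intro k
      have : (⟨T k,0,0,0⟩ : G) = ⟨0,0,0,k⟩ * ⟨1,0,0,0⟩ * ⟨0,0,0,-k⟩ := by
        ext <;> simp
      rw [this]; exact mul_mem (mul_mem (hs k) hx) (hs (-k))
    intro u
    induction u using LaurentPolynomial.induction_on' with
    | add p q hp hq =>
      have : (⟨p + q,0,0,0⟩ : G) = ⟨p,0,0,0⟩ * ⟨q,0,0,0⟩ := by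
        ext <;> simp
      rw [this]; exact mul_mem hp hq
    | C_mul_T n a =>
      rcases (by decide : ∀ b : ZMod 2, b = 0 ∨ b = 1) a with rfl | rfl
      · have h1 : (⟨0,0,0,0⟩ : G) ∈ W := one_mem W
        simpa using h1
      · simpa using hXT n
  have hY : ∀ u : RR, (⟨0,u,0,0⟩ : G) ∈ W := by
    have hYT : ∀ k : ℤ, (⟨0,T k,0,0⟩ : G) ∈ W := by
      intro k
      have : (⟨0,T k,0,0⟩ : G) = ⟨0,0,0,-k⟩ * ⟨0,1,0,0⟩ * ⟨0,0,0,k⟩ := by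
        ext <;> simp
      rw [this]; exact mul_mem (mul_mem (hs (-k)) hy) (hs k)
    intro u
    induction u using LaurentPolynomial.induction_on' with
    | add p q hp hq =>
      have : (⟨0,p + q,0,0⟩ : G) = ⟨0,p,0,0⟩ * ⟨0,q,0,0⟩ := by
        ext <;> simp
      rw [this]; exact mul_mem hp hq
    | C_mul_T n a =>
      rcases (by decide : ∀ b : ZMod 2, b = 0 ∨ b = 1) a with rfl | rfl
      · have h1 : (⟨0,0,0,0⟩ : G) ∈ W := one_mem W
        simpa using h1
      · simpa using hYT n
  have hZ : ∀ w : RR, (⟨0,0,w,0⟩ : G) ∈ W := by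
    intro w
    have : (⟨0,0,w,0⟩ : G) =
        (⟨w,0,0,0⟩ * ⟨0,1,0,0⟩) * ((⟨0,1,0,0⟩ : G) * ⟨w,0,0,0⟩)⁻¹ := by
      ext <;> simp [T_zero] <;> ring
    rw [this]
    exact mul_mem (mul_mem (hX w) (hY 1)) (inv_mem (mul_mem (hY 1) (hX w)))
  rw [Subgroup.eq_top_iff']
  intro g
  have : g = ⟨g.a,0,0,0⟩ * ⟨0,g.b,0,0⟩ * ⟨0,0,g.c - g.a * g.b,0⟩ * ⟨0,0,0,g.n⟩ := by
    ext <;> simp [T_zero] <;> ring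
  rw [this]
  exact mul_mem (mul_mem (mul_mem (hX g.a) (hY g.b)) (hZ _)) (hs g.n)

end G
end PBP2

namespace PBP2
open PBP
namespace G

instance : Infinite G :=
  Infinite.of_injective (fun u : RR => (⟨0,0,u,0⟩ : G))
    (fun u v h => congrArg G.c h)

instance : Infinite Zc :=
  Infinite.of_injective (fun u : RR => (⟨⟨0,0,u,0⟩, by exact ⟨rfl, rfl, rfl⟩⟩ : Zc))
    (fun u v h => congrArg (fun g : Zc => (g : G).c) h)

lemma presentable : PresentableByProduct G := by
  refine ⟨Zc, ⊤, inferInstance, ?_, ?_, ?_⟩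
  · exact Infinite.of_injective (fun g : G => (⟨g, trivial⟩ : (⊤ : Subgroup G)))
      (fun g h hgh => congrArg Subtype.val hgh)
  · rintro h ⟨ha, hb, hn⟩ k -
    ext <;> simp [ha, hb, hn, T_zero] <;> ring
  · rw [sup_top_eq]
    exact Subgroup.instFiniteIndexTop

lemma main : ∀ Γ₁ Γ₂ : Subgroup G, Infinite Γ₁ → Infinite Γ₂ →
    (∀ g₁ ∈ Γ₁, ∀ g₂ ∈ Γ₂, g₁ * g₂ = g₂ * g₁) →
    (Γ₁ ⊔ Γ₂).FiniteIndex → ¬ Γ₁.FG ∨ ¬ Γ₂.FG := by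
  intro Γ₁ Γ₂ h1 h2 hcomm hind
  by_contra hcon
  push_neg at hcon
  obtain ⟨hfg1, hfg2⟩ := hcon
  by_cases hA : ∃ γ ∈ Γ₁, γ.n ≠ 0
  · obtain ⟨γ, hγ1, hγn⟩ := hA
    by_cases hB : ∃ δ ∈ Γ₂, δ.n ≠ 0
    · obtain ⟨δ, hδ2, hδn⟩ := hB
      have hγδ : γ * δ = δ * γ := hcomm γ hγ1 δ hδ2
      have hle : Γ₁ ⊔ Γ₂ ≤ V γ := by
        refine sup_le ?_ ?_
        · intro g hg
          exact mem_V_trans hδn hγδ (hcomm g hg δ hδ2)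
        · intro g hg
          exact mem_V_of_comm (hcomm γ hγ1 g hg).symm
      exact not_finiteIndex_of_le hle (V_index_eq_zero hγn) hind
    · push_neg at hB
      have hle2 : Γ₂ ≤ Zc := by
        intro g hg
        have hn0 : g.n = 0 := hB g hg
        obtain ⟨ha, hb⟩ := centralizer_n_zero hγn (hcomm γ hγ1 g hg) hn0
        exact ⟨ha, hb, hn0⟩
      exact absurd (finite_of_le_Zc_of_fg hle2 hfg2) (Infinite.not_finite)
  · push_neg at hA
    by_cases hB : ∃ δ ∈ Γ₂, δ.n ≠ 0
    · obtain ⟨δ, hδ2, hδn⟩ := hB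
      have hle1 : Γ₁ ≤ Zc := by
        intro g hg
        have hn0 : g.n = 0 := hA g hg
        obtain ⟨ha, hb⟩ := centralizer_n_zero hδn (hcomm g hg δ hδ2).symm hn0
        exact ⟨ha, hb, hn0⟩
      exact absurd (finite_of_le_Zc_of_fg hle1 hfg1) (Infinite.not_finite)
    · push_neg at hB
      have hle : Γ₁ ⊔ Γ₂ ≤ NN :=
        sup_le (fun g hg => hA g hg) (fun g hg => hB g hg)
      exact not_finiteIndex_of_le hle NN_index_eq_zero hind

end G
end PBP2


theorem stmt_1 :
    ∃ (Γ : Type) (_ : Group Γ), Group.FG Γ ∧ PresentableByProduct Γ ∧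
      ∀ Γ₁ Γ₂ : Subgroup Γ, Infinite Γ₁ → Infinite Γ₂ →
        (∀ g₁ ∈ Γ₁, ∀ g₂ ∈ Γ₂, g₁ * g₂ = g₂ * g₁) →
        (Γ₁ ⊔ Γ₂).FiniteIndex → ¬ Γ₁.FG ∨ ¬ Γ₂.FG :=
  ⟨PBP2.G, inferInstance, PBP2.G.fg, PBP2.G.presentable, PBP2.G.main⟩
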